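/- For all w, z ∈ ℂ with exp(z) ≠ 1, the infinite product below converges (is multipliable) and the following identity holds, which is the explicit Weierstrass factorization of exp(w) − exp(z) over the Aut(exp)-orbit {z + 2πin : n ∈ ℤ} of z: exp(w) − exp(z) = (1 − exp(z)) · (1 − w/z) · exp( w/z + w/2 − (w/2)·(exp(z) + 1)/(exp(z) − 1) ) · ∏_{n=1}^∞ (1 − (z² − (z − w)²)/(z² + 4π²n²)) · exp( 2zw/(z² + 4π²n²) ). -/

import Mathlib

open Complex Real Filter Finset Topology

noncomputable def qc (n : ℕ) : ℂ := 4 * (Real.pi : ℂ) ^ 2 * ((n : ℂ) + 1) ^ 2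

lemma qc_eq (n : ℕ) : qc n = ((4 * Real.pi ^ 2 * ((n : ℝ) + 1) ^ 2 : ℝ) : ℂ) := by
  unfold qc; push_cast; ring

lemma qc_ne (n : ℕ) : qc n ≠ 0 := by
  rw [qc_eq]
  norm_cast
  positivity

lemma norm_qc (n : ℕ) : ‖qc n‖ = 4 * Real.pi ^ 2 * ((n : ℝ) + 1) ^ 2 := by
  rw [qc_eq, Complex.norm_real]
  rw [Real.norm_eq_abs, abs_of_pos (by positivity)]

lemma norm_qc_ge (n : ℕ) : 36 * ((n : ℝ) + 1) ^ 2 ≤ ‖qc n‖ := by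
  rw [norm_qc]
  have h : (3:ℝ) ≤ Real.pi := Real.pi_gt_three.le
  have h2 : (0:ℝ) ≤ ((n:ℝ)+1)^2 := by positivity
  have h9 : (36:ℝ) ≤ 4 * Real.pi ^ 2 := by nlinarith
  exact mul_le_mul_of_nonneg_right h9 h2

lemma summable_inv_sq : Summable (fun n : ℕ => (((n : ℝ) + 1) ^ 2)⁻¹) := by
  have := (summable_nat_add_iff (f := fun n : ℕ => ((n : ℝ) ^ 2)⁻¹) 1).2
    (Real.summable_one_div_nat_pow.2 one_lt_two |>.congr (by simp [one_div]))
  exact this.congr (by intro n; push_cast; ring_nf)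

/-- lower bound for `‖u^2 + qc n‖` when `‖u‖ ≤ n+1`. -/
lemma norm_sq_add_qc_ge {u : ℂ} {n : ℕ} (h : ‖u‖ ≤ (n : ℝ) + 1) :
    35 * ((n : ℝ) + 1) ^ 2 ≤ ‖u ^ 2 + qc n‖ := by
  have h1 : ‖qc n‖ - ‖-(u ^ 2)‖ ≤ ‖qc n - -(u ^ 2)‖ := norm_sub_norm_le _ _
  have h2 : ‖u ^ 2‖ ≤ ((n : ℝ) + 1) ^ 2 := by
    rw [norm_pow]
    exact pow_le_pow_left₀ (norm_nonneg _) h 2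
  have h3 := norm_qc_ge n
  have : qc n - -(u ^ 2) = u ^ 2 + qc n := by ring
  rw [this, norm_neg] at h1
  linarith

lemma summable_norm_div_qc (c : ℂ) : Summable (fun n : ℕ => ‖c / qc n‖) := by
  have := summable_inv_sq.mul_left (‖c‖ / (4 * Real.pi ^ 2))
  refine this.congr fun n => ?_
  rw [norm_div, norm_qc]
  have h1 : (0:ℝ) < 4 * Real.pi ^ 2 := by positivity
  have h2 : (0:ℝ) < ((n:ℝ)+1)^2 := by positivity
  field_simp

lemma summable_div_qc (c : ℂ) : Summable (fun n : ℕ => c / qc n) :=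
  (summable_norm_div_qc c).of_norm

lemma summable_log_one_add (u : ℂ) :
    Summable (fun n : ℕ => Complex.log (1 + u ^ 2 / qc n)) := by
  have hev : ∀ᶠ n : ℕ in atTop, ‖u ^ 2 / qc n‖ < 1 / 2 :=
    (summable_norm_div_qc (u ^ 2)).tendsto_atTop_zero.eventually
      (gt_mem_nhds (by norm_num : (0:ℝ) < 1 / 2))
  refine Summable.of_norm_bounded_eventually_nat (g := fun n => 3 / 2 * ‖u ^ 2 / qc n‖)
    ((summable_norm_div_qc (u ^ 2)).mul_left _) ?_
  filter_upwards [hev] with n hn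
  exact Complex.norm_log_one_add_half_le_self hn.le

lemma hasProd_zero_of_zero {f : ℕ → ℂ} (k : ℕ) (h : f k = 0) : HasProd f 0 := by
  have hev : ∀ᶠ s : Finset ℕ in atTop, (0:ℂ) = ∏ i ∈ s, f i := by
    filter_upwards [eventually_ge_atTop ({k} : Finset ℕ)] with s hs
    exact (Finset.prod_eq_zero (hs (Finset.mem_singleton_self k)) h).symm
  exact tendsto_const_nhds.congr' hev

lemma multipliable_one_add (u : ℂ) : Multipliable (fun n : ℕ => 1 + u ^ 2 / qc n) := by
  by_cases hv : ∀ n, 1 + u ^ 2 / qc n ≠ 0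
  · exact Complex.multipliable_of_summable_log (summable_log_one_add u)
  · push_neg at hv
    obtain ⟨k, hk⟩ := hv
    exact ⟨0, hasProd_zero_of_zero k hk⟩

lemma exp_sub_one_eq (u : ℂ) :
    Complex.exp u - 1 = u * Complex.exp (u / 2) * ∏' n : ℕ, (1 + u ^ 2 / qc n) := by
  have hπ : ((Real.pi : ℂ)) ≠ 0 := ofReal_ne_zero.2 Real.pi_ne_zero
  have hm := multipliable_one_add u
  set P := ∏' n : ℕ, (1 + u ^ 2 / qc n) with hP
  have h1 : Tendsto (fun N : ℕ => (u / (2 * I)) * ∏ j ∈ range N, (1 + u ^ 2 / qc j))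
      atTop (𝓝 ((u / (2 * I)) * P)) := (hm.hasProd.tendsto_prod_nat).const_mul _
  have h2 := Complex.tendsto_euler_sin_prod (u / (2 * (Real.pi:ℂ) * I))
  have hterm : ∀ j : ℕ, (1 : ℂ) - (u / (2 * (Real.pi:ℂ) * I)) ^ 2 / ((j:ℂ) + 1) ^ 2
      = 1 + u ^ 2 / qc j := by
    intro j
    have hj : ((j:ℂ) + 1) ≠ 0 := Nat.cast_add_one_ne_zero j
    rw [qc]
    field_simp
    ring_nf
    rw [Complex.I_sq]
    ring
  have hc : (Real.pi:ℂ) * (u / (2 * (Real.pi:ℂ) * I)) = u / (2 * I) := by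
    field_simp
  have h2' : Tendsto (fun N : ℕ => (u / (2 * I)) * ∏ j ∈ range N, (1 + u ^ 2 / qc j))
      atTop (𝓝 (Complex.sin ((Real.pi:ℂ) * (u / (2 * (Real.pi:ℂ) * I))))) := by
    refine h2.congr fun N => ?_
    rw [hc]
    congr 1
    exact Finset.prod_congr rfl fun j _ => hterm j
  have hsin : Complex.sin ((Real.pi:ℂ) * (u / (2 * (Real.pi:ℂ) * I))) =
      -(Complex.sinh (u / 2)) * I := by
    rw [hc]
    have : u / (2 * I) = -(u / 2) * I := by
      field_simp
      linear_combination u * Complex.I_sq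
    rw [this, Complex.sin_mul_I, Complex.sinh_neg]
  have key : (u / (2 * I)) * P = -(Complex.sinh (u / 2)) * I := by
    rw [← hsin]
    exact tendsto_nhds_unique h1 h2'
  have key2 : u * P = Complex.exp (u / 2) - Complex.exp (-(u / 2)) := by
    have hI : (2 * I : ℂ) ≠ 0 := by simp [Complex.I_ne_zero]
    rw [div_mul_eq_mul_div, div_eq_iff hI] at key
    rw [Complex.sinh] at key
    have h4 := Complex.I_sq
    linear_combination key - (Complex.exp (u/2) - Complex.exp (-(u/2))) * h4
  calc Complex.exp u - 1
      = Complex.exp (u / 2) * (Complex.exp (u / 2) - Complex.exp (-(u / 2))) := by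
        rw [mul_sub, ← Complex.exp_add, ← Complex.exp_add]
        norm_num
    _ = u * Complex.exp (u / 2) * P := by rw [← key2]; ring

lemma norm_div_qc_le_half {u : ℂ} {k : ℕ} (h : ‖u‖ ≤ (k : ℝ) + 1) :
    ‖u ^ 2 / qc k‖ ≤ 1 / 2 := by
  rw [norm_div, norm_pow, norm_qc]
  have h9 : (36:ℝ) ≤ 4 * Real.pi ^ 2 := by nlinarith [Real.pi_gt_three]
  have hp : (0:ℝ) < 4 * Real.pi ^ 2 * ((k:ℝ) + 1) ^ 2 := by positivity
  rw [div_le_iff₀ hp]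
  have h4 : ‖u‖ ^ 2 ≤ ((k:ℝ) + 1) ^ 2 := pow_le_pow_left₀ (norm_nonneg _) h 2
  nlinarith [sq_nonneg ((k:ℝ)+1)]

lemma one_add_mem_slitPlane {x : ℂ} (h : ‖x‖ ≤ 1 / 2) : 1 + x ∈ Complex.slitPlane := by
  rw [Complex.mem_slitPlane_iff]
  left
  have h1 : |x.re| ≤ ‖x‖ := by
    exact Complex.abs_re_le_norm x
  simp only [Complex.add_re, Complex.one_re]
  linarith [(abs_le.1 (le_trans h1 h)).1]

lemma summable_div_sq_add (u c : ℂ) : Summable (fun n : ℕ => c / (u ^ 2 + qc n)) := by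
  refine Summable.of_norm_bounded_eventually_nat (g := fun n => ‖c‖ / 35 * (((n:ℝ) + 1) ^ 2)⁻¹)
    (summable_inv_sq.mul_left _) ?_
  filter_upwards [eventually_ge_atTop (⌈‖u‖⌉₊)] with n hn
  have h1 : ‖u‖ ≤ (n : ℝ) + 1 := by
    calc ‖u‖ ≤ (⌈‖u‖⌉₊ : ℝ) := Nat.le_ceil _
    _ ≤ (n : ℝ) := by exact_mod_cast hn
    _ ≤ (n : ℝ) + 1 := by linarith
  have h2 := norm_sq_add_qc_ge h1
  have h3 : (0:ℝ) < 35 * ((n:ℝ) + 1) ^ 2 := by positivity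
  rw [norm_div]
  calc ‖c‖ / ‖u ^ 2 + qc n‖ ≤ ‖c‖ / (35 * ((n:ℝ) + 1) ^ 2) := by gcongr
  _ = ‖c‖ / 35 * (((n:ℝ) + 1) ^ 2)⁻¹ := by field_simp

lemma tprod_split (f : ℕ → ℂ) (M : ℕ) (hf : Multipliable f)
    (ht : Multipliable fun n => f (n + M)) :
    ∏' n, f n = (∏ j ∈ range M, f j) * ∏' n, f (n + M) := by
  have h3 : Tendsto (fun N : ℕ => ∏ j ∈ range (N + M), f j) atTop (𝓝 (∏' n, f n)) :=
    hf.hasProd.tendsto_prod_nat.comp (tendsto_add_atTop_nat M)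
  have h2 : Tendsto (fun N : ℕ => (∏ j ∈ range M, f j) * ∏ i ∈ range N, f (i + M)) atTop
      (𝓝 ((∏ j ∈ range M, f j) * ∏' n, f (n + M))) :=
    ht.hasProd.tendsto_prod_nat.const_mul _
  refine tendsto_nhds_unique (h3.congr fun N => ?_) h2
  rw [add_comm N M, Finset.prod_range_add]
  congr 1
  exact Finset.prod_congr rfl fun i _ => by rw [add_comm]

lemma tail_exp_eq {R : ℝ} (M : ℕ) (hRM : R ≤ (M : ℝ)) {u : ℂ} (hu : ‖u‖ < R) :
    ∏' n : ℕ, (1 + u ^ 2 / qc (n + M)) =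
      Complex.exp (∑' n : ℕ, Complex.log (1 + u ^ 2 / qc (n + M))) := by
  have hsmall : ∀ (x : {v : ℂ // ‖v‖ < R}) (n : ℕ), ‖(x : ℂ) ^ 2 / qc (n + M)‖ ≤ 1 / 2 := by
    intro x n
    refine norm_div_qc_le_half ?_
    have : ((M:ℝ)) ≤ ((n + M : ℕ) : ℝ) + 1 := by push_cast; linarith [Nat.cast_nonneg (α := ℝ) n]
    linarith [x.2]
  have hfn : ∀ (x : {v : ℂ // ‖v‖ < R}) (n : ℕ), 1 + (x : ℂ) ^ 2 / qc (n + M) ≠ 0 :=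
    fun x n => Complex.slitPlane_ne_zero (one_add_mem_slitPlane (hsmall x n))
  have hf : ∀ x : {v : ℂ // ‖v‖ < R},
      Summable fun n : ℕ => Complex.log (1 + (x : ℂ) ^ 2 / qc (n + M)) := by
    intro x
    exact ((summable_nat_add_iff M).2 (summable_log_one_add (x : ℂ))).congr (fun n => rfl)
  have := Complex.cexp_tsum_eq_tprod (f := fun n => 1 + u ^ 2 / qc (n + M))
    (fun n => hfn ⟨u, hu⟩ n) (hf ⟨u, hu⟩)
  exact this.symm

lemma tail_mult {R : ℝ} (M : ℕ) (hRM : R ≤ (M : ℝ)) {u : ℂ} (hu : ‖u‖ < R) :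
    Multipliable fun n : ℕ => 1 + u ^ 2 / qc (n + M) := by
  have hsmall : ∀ (x : {v : ℂ // ‖v‖ < R}) (n : ℕ), ‖(x : ℂ) ^ 2 / qc (n + M)‖ ≤ 1 / 2 := by
    intro x n
    refine norm_div_qc_le_half ?_
    have : ((M:ℝ)) ≤ ((n + M : ℕ) : ℝ) + 1 := by push_cast; linarith [Nat.cast_nonneg (α := ℝ) n]
    linarith [x.2]
  exact Complex.multipliable_of_summable_log
    (((summable_nat_add_iff M).2 (summable_log_one_add u)).congr fun n => rfl)

lemma one_add_div_qc (a : ℂ) (n : ℕ) : 1 + a / qc n = (a + qc n) / qc n := by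
  field_simp [qc_ne n]
  ring

lemma sq_add_qc_ne {z : ℂ} (hz : Complex.exp z ≠ 1) (n : ℕ) : z ^ 2 + qc n ≠ 0 := by
  intro h
  have hsq : (z - 2 * (Real.pi : ℂ) * ((n : ℂ) + 1) * I) *
      (z + 2 * (Real.pi : ℂ) * ((n : ℂ) + 1) * I) = 0 := by
    unfold qc at h
    linear_combination h - (4 * (Real.pi:ℂ)^2 * ((n:ℂ)+1)^2) * Complex.I_sq
  rcases mul_eq_zero.1 hsq with h1 | h1
  · apply hz
    rw [sub_eq_zero] at h1
    rw [h1, show (2 * (Real.pi:ℂ) * ((n:ℂ) + 1) * I) = ((((n : ℤ) + 1) : ℤ) : ℂ) * (2 * (Real.pi:ℂ) * I) by push_cast; ring,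
      Complex.exp_int_mul_two_pi_mul_I]
  · apply hz
    rw [add_eq_zero_iff_eq_neg] at h1
    rw [h1, show (-(2 * (Real.pi:ℂ) * ((n:ℂ) + 1) * I)) = (((-((n : ℤ) + 1)) : ℤ) : ℂ) * (2 * (Real.pi:ℂ) * I) by push_cast; ring,
      Complex.exp_int_mul_two_pi_mul_I]

lemma tsum_two_div {z : ℂ} (hz : Complex.exp z ≠ 1) :
    ∑' n : ℕ, 2 * z / (z ^ 2 + qc n) =
      (Complex.exp z + 1) / (2 * (Complex.exp z - 1)) - 1 / z := by
  have hz0 : z ≠ 0 := fun h => hz (by simp [h])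
  have hD : ∀ n, z ^ 2 + qc n ≠ 0 := sq_add_qc_ne hz
  set R : ℝ := ‖z‖ + 1 with hR
  set M : ℕ := ⌈R⌉₊ with hM
  have hRM : R ≤ (M : ℝ) := Nat.le_ceil R
  have hR0 : 0 < R := by positivity
  have hzB : ‖z‖ < R := by rw [hR]; linarith
  have hkey : ∀ u : ℂ, ‖u‖ < R → ∀ n : ℕ, ‖u‖ ≤ ((n + M : ℕ) : ℝ) + 1 := by
    intro u hu n
    have : (M : ℝ) ≤ ((n + M : ℕ) : ℝ) + 1 := by push_cast; linarith [Nat.cast_nonneg (α := ℝ) n]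
    linarith
  -- derivative of each log term
  have hg : ∀ (n : ℕ) (u : ℂ), u ∈ Metric.ball (0:ℂ) R →
      HasDerivAt (fun v => Complex.log (1 + v ^ 2 / qc (n + M)))
        (2 * u / (u ^ 2 + qc (n + M))) u := by
    intro n u hu
    rw [mem_ball_zero_iff] at hu
    have hsm : ‖u ^ 2 / qc (n + M)‖ ≤ 1 / 2 := norm_div_qc_le_half (hkey u hu n)
    have hslit := one_add_mem_slitPlane hsm
    have hne : 1 + u ^ 2 / qc (n + M) ≠ 0 := Complex.slitPlane_ne_zero hslit
    have hne2 : u ^ 2 + qc (n + M) ≠ 0 := by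
      intro h0
      apply hne
      rw [one_add_div_qc, h0, zero_div]
    have hd1 : HasDerivAt (fun v : ℂ => 1 + v ^ 2 / qc (n + M)) (2 * u / qc (n + M)) u := by
      have := ((hasDerivAt_pow 2 u).div_const (qc (n + M))).const_add (1:ℂ)
      simpa [pow_one] using this
    have hd2 := (Complex.hasDerivAt_log hslit).comp u hd1
    have hval : (1 + u ^ 2 / qc (n + M))⁻¹ * (2 * u / qc (n + M))
        = 2 * u / (u ^ 2 + qc (n + M)) := by
      rw [one_add_div_qc, inv_div, div_mul_div_comm,
        mul_comm (u ^ 2 + qc (n + M)) (qc (n + M)), mul_div_mul_left _ _ (qc_ne (n + M))]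
    simpa [Function.comp_def, hval] using hd2
  -- bound for derivatives
  have hg' : ∀ (n : ℕ) (u : ℂ), u ∈ Metric.ball (0:ℂ) R →
      ‖2 * u / (u ^ 2 + qc (n + M))‖ ≤ 2 * R / 35 * (((n:ℝ) + 1) ^ 2)⁻¹ := by
    intro n u hu
    rw [mem_ball_zero_iff] at hu
    have hden := norm_sq_add_qc_ge (hkey u hu n)
    have hden2 : 35 * ((n : ℝ) + 1) ^ 2 ≤ ‖u ^ 2 + qc (n + M)‖ := by
      refine le_trans ?_ hden
      have : ((n:ℝ) + 1) ^ 2 ≤ (((n + M : ℕ) : ℝ) + 1) ^ 2 := by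
        have : ((n:ℝ) + 1) ≤ ((n + M : ℕ) : ℝ) + 1 := by push_cast; linarith [Nat.cast_nonneg (α := ℝ) M]
        nlinarith [Nat.cast_nonneg (α := ℝ) n]
      linarith
    have hnum : ‖2 * u‖ ≤ 2 * R := by
      rw [norm_mul]
      simp only [Complex.norm_ofNat]
      nlinarith [norm_nonneg u]
    rw [norm_div]
    calc ‖2 * u‖ / ‖u ^ 2 + qc (n + M)‖ ≤ (2 * R) / (35 * ((n:ℝ) + 1) ^ 2) := by
          apply div_le_div₀ (by positivity) hnum (by positivity) hden2
      _ = 2 * R / 35 * (((n:ℝ) + 1) ^ 2)⁻¹ := by field_simp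
  -- differentiate the log-sum
  have hL : HasDerivAt (fun v => ∑' n : ℕ, Complex.log (1 + v ^ 2 / qc (n + M)))
      (∑' n : ℕ, 2 * z / (z ^ 2 + qc (n + M))) z := by
    refine hasDerivAt_tsum_of_isPreconnected (summable_inv_sq.mul_left (2 * R / 35))
      Metric.isOpen_ball (convex_ball (0:ℂ) R).isPreconnected hg hg'
      (by rw [mem_ball_zero_iff, norm_zero]; exact hR0) ?_ (by rwa [mem_ball_zero_iff])
    refine summable_zero.congr fun n => ?_
    rw [zero_pow two_ne_zero, zero_div, add_zero, Complex.log_one]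
  -- identity near z
  have hid : ∀ u ∈ Metric.ball (0:ℂ) R,
      Complex.exp u - 1 = u * Complex.exp (u / 2) * (∏ j ∈ range M, (1 + u ^ 2 / qc j)) *
        Complex.exp (∑' n : ℕ, Complex.log (1 + u ^ 2 / qc (n + M))) := by
    intro u hu
    rw [mem_ball_zero_iff] at hu
    have h1 := exp_sub_one_eq u
    rw [tprod_split _ M (multipliable_one_add u) (tail_mult M hRM hu),
      tail_exp_eq M hRM hu] at h1
    rw [h1]
    ring
  -- now the logDeriv computation
  have hLd : HasDerivAt (fun v => ∑' n : ℕ, Complex.log (1 + v ^ 2 / qc (n + M)))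
      (∑' n : ℕ, 2 * z / (z ^ 2 + qc (n + M))) z := hL
  have hne_fac : ∀ j : ℕ, 1 + z ^ 2 / qc j ≠ 0 := by
    intro j
    rw [one_add_div_qc]
    exact div_ne_zero (hD j) (qc_ne j)
  have hQz : (∏ j ∈ range M, (1 + z ^ 2 / qc j)) ≠ 0 :=
    Finset.prod_ne_zero_iff.2 fun j _ => hne_fac j
  have hdQ : ∀ j : ℕ, HasDerivAt (fun v : ℂ => 1 + v ^ 2 / qc j) (2 * z / qc j) z := fun j => by
    simpa [pow_one] using ((hasDerivAt_pow 2 z).div_const (qc j)).const_add (1:ℂ)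
  have hdexp2 : HasDerivAt (fun u : ℂ => Complex.exp (u / 2))
      (Complex.exp (z / 2) * (2⁻¹ : ℂ)) z := by
    simpa using ((hasDerivAt_id z).div_const 2).cexp
  have hQdiff : DifferentiableAt ℂ (fun u : ℂ => ∏ j ∈ range M, (1 + u ^ 2 / qc j)) z := by
    have := DifferentiableAt.fun_finsetProd
      (u := range M) (f := fun j (u : ℂ) => 1 + u ^ 2 / qc j) (x := z)
      (fun j _ => (hdQ j).differentiableAt)
    exact this
  have hdL : HasDerivAt (fun u => Complex.exp (∑' n : ℕ, Complex.log (1 + u ^ 2 / qc (n + M))))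
      (Complex.exp (∑' n : ℕ, Complex.log (1 + z ^ 2 / qc (n + M))) *
        (∑' n : ℕ, 2 * z / (z ^ 2 + qc (n + M)))) z := hLd.cexp
  have hEq : (fun u => Complex.exp u - 1) =ᶠ[𝓝 z]
      (fun u => u * Complex.exp (u / 2) * (∏ j ∈ range M, (1 + u ^ 2 / qc j)) *
        Complex.exp (∑' n : ℕ, Complex.log (1 + u ^ 2 / qc (n + M)))) :=
    eventually_of_mem (Metric.isOpen_ball.mem_nhds (by rwa [mem_ball_zero_iff])) hid
  have hlog : Complex.exp z / (Complex.exp z - 1)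
      = 1 / z + 1 / 2 + ((∑ j ∈ range M, 2 * z / (z ^ 2 + qc j))
          + (∑' n : ℕ, 2 * z / (z ^ 2 + qc (n + M)))) := by
    have hF : HasDerivAt (fun u => Complex.exp u - 1) (Complex.exp z) z := by
      simpa using (Complex.hasDerivAt_exp z).sub_const 1
    have h1 : logDeriv (fun u => Complex.exp u - 1) z = Complex.exp z / (Complex.exp z - 1) := by
      rw [logDeriv_apply, hF.deriv]
    rw [← h1]
    have h2 : logDeriv (fun u => Complex.exp u - 1) z
        = logDeriv (fun u => u * Complex.exp (u / 2) * (∏ j ∈ range M, (1 + u ^ 2 / qc j)) *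
            Complex.exp (∑' n : ℕ, Complex.log (1 + u ^ 2 / qc (n + M)))) z := by
      rw [logDeriv_apply, logDeriv_apply, hEq.deriv_eq, hEq.eq_of_nhds]
    rw [h2]
    have hm1 := logDeriv_mul (𝕜 := ℂ) (𝕜' := ℂ)
      (f := fun u : ℂ => u * Complex.exp (u / 2) * (∏ j ∈ range M, (1 + u ^ 2 / qc j)))
      (g := fun u : ℂ => Complex.exp (∑' n : ℕ, Complex.log (1 + u ^ 2 / qc (n + M)))) z
      (mul_ne_zero (mul_ne_zero hz0 (Complex.exp_ne_zero _)) hQz) (Complex.exp_ne_zero _)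
      ((differentiableAt_fun_id.mul hdexp2.differentiableAt).mul hQdiff) hdL.differentiableAt
    have hm2 := logDeriv_mul (𝕜 := ℂ) (𝕜' := ℂ) (f := fun u : ℂ => u * Complex.exp (u / 2))
      (g := fun u : ℂ => ∏ j ∈ range M, (1 + u ^ 2 / qc j)) z
      (mul_ne_zero hz0 (Complex.exp_ne_zero _)) hQz
      (differentiableAt_fun_id.mul hdexp2.differentiableAt) hQdiff
    have hm3 := logDeriv_mul (𝕜 := ℂ) (𝕜' := ℂ) (f := fun u : ℂ => u)
      (g := fun u : ℂ => Complex.exp (u / 2)) z hz0 (Complex.exp_ne_zero _)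
      differentiableAt_fun_id hdexp2.differentiableAt
    beta_reduce at hm1 hm2 hm3
    rw [hm1, hm2, hm3]
    have e1 : logDeriv (fun u : ℂ => u) z = 1 / z := by
      rw [logDeriv_apply, deriv_id'']
    have e2 : logDeriv (fun u : ℂ => Complex.exp (u / 2)) z = 1 / 2 := by
      rw [logDeriv_apply, hdexp2.deriv]
      field_simp [Complex.exp_ne_zero]
    have e3 : logDeriv (fun u : ℂ => ∏ j ∈ range M, (1 + u ^ 2 / qc j)) z
        = ∑ j ∈ range M, 2 * z / (z ^ 2 + qc j) := by
      rw [logDeriv_prod (s := range M) (f := fun j (u : ℂ) => 1 + u ^ 2 / qc j) (x := z)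
        (fun j _ => hne_fac j) (fun j _ => (hdQ j).differentiableAt)]
      refine Finset.sum_congr rfl fun j _ => ?_
      rw [logDeriv_apply, (hdQ j).deriv, one_add_div_qc]
      rw [div_div_div_cancel_right₀]
      exact qc_ne j
    have e4 : logDeriv (fun u : ℂ =>
        Complex.exp (∑' n : ℕ, Complex.log (1 + u ^ 2 / qc (n + M)))) z
        = ∑' n : ℕ, 2 * z / (z ^ 2 + qc (n + M)) := by
      rw [logDeriv_apply, hdL.deriv, mul_div_cancel_left₀ _ (Complex.exp_ne_zero _)]
    rw [e1, e2, e3, e4]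
    ring
  have hsum := (summable_div_sq_add z (2 * z)).sum_add_tsum_nat_add M
  rw [hsum] at hlog
  have he : Complex.exp z - 1 ≠ 0 := sub_ne_zero.2 hz
  have hfin : ∑' n : ℕ, 2 * z / (z ^ 2 + qc n)
      = Complex.exp z / (Complex.exp z - 1) - 1 / z - 1 / 2 := by
    have hlog' : Complex.exp z / (Complex.exp z - 1)
        = 1 / z + 1 / 2 + ∑' n : ℕ, 2 * z / (z ^ 2 + qc n) := hlog
    rw [hlog']
    ring
  rw [hfin]
  field_simp
  ring

/-- The explicit Weierstrass factorization of `exp w - exp z` over the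
`Aut(exp)`-orbit `{z + 2πin : n ∈ ℤ}` of `z`, valid whenever `exp z ≠ 1`: the infinite
product over `n ≥ 1` converges and
`e^w - e^z = (1 - e^z)(1 - w/z)·exp(w/z + w/2 - (w/2)(e^z+1)/(e^z-1))· ∏_{n=1}^∞ (1 - (z² - (z-w)²)/(z² + 4π²n²))·exp(2zw/(z² + 4π²n²))`. -/
theorem exp_sub_exp_weierstrass_product (w z : ℂ) (hz : Complex.exp z ≠ 1) :
    Multipliable (fun n : ℕ =>
      (1 - (z ^ 2 - (z - w) ^ 2) / (z ^ 2 + 4 * (Real.pi : ℂ) ^ 2 * ((n : ℂ) + 1) ^ 2)) *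
        Complex.exp (2 * z * w / (z ^ 2 + 4 * (Real.pi : ℂ) ^ 2 * ((n : ℂ) + 1) ^ 2))) ∧
    Complex.exp w - Complex.exp z =
      (1 - Complex.exp z) * (1 - w / z) *
        Complex.exp (w / z + w / 2 -
          (w / 2) * ((Complex.exp z + 1) / (Complex.exp z - 1))) *
        ∏' n : ℕ,
          (1 - (z ^ 2 - (z - w) ^ 2) / (z ^ 2 + 4 * (Real.pi : ℂ) ^ 2 * ((n : ℂ) + 1) ^ 2)) *
            Complex.exp (2 * z * w / (z ^ 2 + 4 * (Real.pi : ℂ) ^ 2 * ((n : ℂ) + 1) ^ 2)) := by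
  have hqc : ∀ n : ℕ, (4 : ℂ) * (Real.pi : ℂ) ^ 2 * ((n : ℂ) + 1) ^ 2 = qc n := fun n => rfl
  simp only [hqc]
  have hz0 : z ≠ 0 := fun h => hz (by simp [h])
  have he1 : Complex.exp z - 1 ≠ 0 := sub_ne_zero.2 hz
  have hD : ∀ n, z ^ 2 + qc n ≠ 0 := sq_add_qc_ne hz
  have hb : ∀ n, (1 + z ^ 2 / qc n) ≠ 0 := fun n => by
    rw [one_add_div_qc]; exact div_ne_zero (hD n) (qc_ne n)
  have hSt : Summable (fun n : ℕ => 2 * z * w / (z ^ 2 + qc n)) := summable_div_sq_add z (2 * z * w)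
  have hE : HasProd (fun n : ℕ => Complex.exp (2 * z * w / (z ^ 2 + qc n)))
      (Complex.exp (∑' n : ℕ, 2 * z * w / (z ^ 2 + qc n))) := by
    have h0 := hSt.hasSum
    unfold HasProd
    have hfe : (fun s : Finset ℕ => ∏ i ∈ s, Complex.exp (2 * z * w / (z ^ 2 + qc i)))
        = fun s : Finset ℕ => Complex.exp (∑ i ∈ s, 2 * z * w / (z ^ 2 + qc i)) := by
      funext s; rw [Complex.exp_sum]
    rw [hfe]
    exact (Complex.continuous_exp.tendsto _).comp h0
  have hMb := multipliable_one_add z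
  have hMa := multipliable_one_add (z - w)
  have hPb : (∏' n : ℕ, (1 + z ^ 2 / qc n)) ≠ 0 := by
    intro h0
    have h1 := exp_sub_one_eq z
    rw [h0, mul_zero] at h1
    exact he1 h1
  have hae : HasProd (fun n : ℕ => (1 + (z - w) ^ 2 / qc n) *
      Complex.exp (2 * z * w / (z ^ 2 + qc n)))
      ((∏' n : ℕ, (1 + (z - w) ^ 2 / qc n)) *
        Complex.exp (∑' n : ℕ, 2 * z * w / (z ^ 2 + qc n))) := hMa.hasProd.mul hE
  have hre : HasProd (fun n : ℕ => (1 - (z ^ 2 - (z - w) ^ 2) / (z ^ 2 + qc n)) *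
      Complex.exp (2 * z * w / (z ^ 2 + qc n)))
      ((∏' n : ℕ, (1 + (z - w) ^ 2 / qc n)) *
        Complex.exp (∑' n : ℕ, 2 * z * w / (z ^ 2 + qc n)) / (∏' n : ℕ, (1 + z ^ 2 / qc n))) := by
    have h3 := Filter.Tendsto.div hae hMb.hasProd hPb
    have h4 : Tendsto (fun s : Finset ℕ =>
        (∏ b ∈ s, ((1 + (z - w) ^ 2 / qc b) * Complex.exp (2 * z * w / (z ^ 2 + qc b)))) /
          ∏ b ∈ s, (1 + z ^ 2 / qc b)) atTop
        (𝓝 ((∏' n : ℕ, (1 + (z - w) ^ 2 / qc n)) *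
          Complex.exp (∑' n : ℕ, 2 * z * w / (z ^ 2 + qc n)) /
            (∏' n : ℕ, (1 + z ^ 2 / qc n)))) := h3
    refine h4.congr fun s => ?_
    rw [← Finset.prod_div_distrib]
    refine Finset.prod_congr rfl fun n _ => ?_
    have hkey : (1 - (z ^ 2 - (z - w) ^ 2) / (z ^ 2 + qc n)) * (1 + z ^ 2 / qc n)
        = 1 + (z - w) ^ 2 / qc n := by
      field_simp [hD n, qc_ne n]
      ring
    rw [div_eq_iff (hb n)]
    linear_combination -Complex.exp (2 * z * w / (z ^ 2 + qc n)) * hkey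
  refine ⟨⟨_, hre⟩, ?_⟩
  rw [hre.tprod_eq]
  -- substitutions
  have hT : (∑' n : ℕ, 2 * z * w / (z ^ 2 + qc n))
      = w * ((Complex.exp z + 1) / (2 * (Complex.exp z - 1)) - 1 / z) := by
    rw [← tsum_two_div hz, ← tsum_mul_left]
    refine tsum_congr fun n => ?_
    field_simp
  have hPP : (∏' n : ℕ, (1 + (z - w) ^ 2 / qc n)) = ∏' n : ℕ, (1 + (w - z) ^ 2 / qc n) :=
    tprod_congr fun n => by rw [show ((z - w) : ℂ) ^ 2 = (w - z) ^ 2 by ring]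
  have h1z : 1 - Complex.exp z
      = -(z * Complex.exp (z / 2) * ∏' n : ℕ, (1 + z ^ 2 / qc n)) := by
    linear_combination -exp_sub_one_eq z
  have hlw : Complex.exp w - Complex.exp z
      = Complex.exp z * ((w - z) * Complex.exp ((w - z) / 2) *
          ∏' n : ℕ, (1 + (w - z) ^ 2 / qc n)) := by
    have h2 := exp_sub_one_eq (w - z)
    have h3 : Complex.exp z * Complex.exp (w - z) = Complex.exp w := by
      rw [← Complex.exp_add]; ring_nf
    linear_combination Complex.exp z * h2 - h3
  rw [hlw, h1z, hT, hPP]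
  -- collapse exponentials
  have harg : Complex.exp (w / z + w / 2 -
        w / 2 * ((Complex.exp z + 1) / (Complex.exp z - 1))) *
      Complex.exp (w * ((Complex.exp z + 1) / (2 * (Complex.exp z - 1)) - 1 / z))
      = Complex.exp (w / 2) := by
    rw [← Complex.exp_add]
    congr 1
    field_simp
    ring
  have hsplit : Complex.exp (w / 2) = Complex.exp ((w - z) / 2) * Complex.exp (z / 2) := by
    rw [← Complex.exp_add]; ring_nf
  have hzz : Complex.exp z = Complex.exp (z / 2) * Complex.exp (z / 2) := by
    rw [← Complex.exp_add]; ring_nf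
  calc Complex.exp z * ((w - z) * Complex.exp ((w - z) / 2) *
          ∏' n : ℕ, (1 + (w - z) ^ 2 / qc n))
      = (Complex.exp (z / 2) * Complex.exp (z / 2)) * ((w - z) * Complex.exp ((w - z) / 2) *
          ∏' n : ℕ, (1 + (w - z) ^ 2 / qc n)) := by rw [← hzz]
    _ = -(z * Complex.exp (z / 2) * ∏' n : ℕ, (1 + z ^ 2 / qc n)) * (1 - w / z) *
        (Complex.exp (w / z + w / 2 - w / 2 * ((Complex.exp z + 1) / (Complex.exp z - 1))) *
          Complex.exp (w * ((Complex.exp z + 1) / (2 * (Complex.exp z - 1)) - 1 / z))) *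
        ((∏' n : ℕ, (1 + (w - z) ^ 2 / qc n)) / (∏' n : ℕ, (1 + z ^ 2 / qc n))) := by
        rw [harg, hsplit]
        field_simp
        ring
    _ = -(z * Complex.exp (z / 2) * ∏' n : ℕ, (1 + z ^ 2 / qc n)) * (1 - w / z) *
        Complex.exp (w / z + w / 2 - w / 2 * ((Complex.exp z + 1) / (Complex.exp z - 1))) *
        ((∏' n : ℕ, (1 + (w - z) ^ 2 / qc n)) *
          Complex.exp (w * ((Complex.exp z + 1) / (2 * (Complex.exp z - 1)) - 1 / z)) /
            (∏' n : ℕ, (1 + z ^ 2 / qc n))) := by ring
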